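/- Let 𝒞 be a finitely complete category, I : 𝒞 ⥤ 𝒞 a functor preserving finite limits, and η : 𝟭_𝒞 ⟶ I a natural transformation. Let V be a group object in 𝒞 with multiplication m, unit e : ⊤ → V and inversion ι. Define T^∞V as the pullback of η_V : V → I V along itself, with first projection π and second projection ev, and define the formal disk D_e as the pullback of η_V ∘ e : ⊤ → I V along η_V : V → I V, with inclusion i : D_e → V. Then there is an isomorphism T^∞V ≅ V × D_e in Over V identifying π with the first projection pr₁ : V × D_e → V; moreover, under this isomorphism the morphism ev : T^∞V → V is identified with the composite V × D_e → V × V → V given by (id_V × i) followed by m ∘ (id_V × ι) (right translation by inverses of elements of D_e). -/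

import Mathlib

open CategoryTheory CategoryTheory.Limits

namespace Statement3Aux

variable {C : Type*} [Category C] [HasFiniteLimits C]

/-- Multiplication of generalized elements of a group object. -/
noncomputable abbrev gmul {V X : C} (m : V ⨯ V ⟶ V) (f g : X ⟶ V) : X ⟶ V :=
  prod.lift f g ≫ m

lemma comp_gmul {V X Y : C} (m : V ⨯ V ⟶ V) (h : Y ⟶ X) (f g : X ⟶ V) :
    h ≫ gmul m f g = gmul m (h ≫ f) (h ≫ g) := by
  simp [gmul, prod.comp_lift_assoc]

section Group

variable {V : C} {m : V ⨯ V ⟶ V} {e : ⊤_ C ⟶ V} {ι : V ⟶ V}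

lemma l_assoc (assoc : prod.map m (𝟙 V) ≫ m = (prod.associator V V V).hom ≫ prod.map (𝟙 V) m ≫ m)
    {X : C} (a b c : X ⟶ V) : gmul m (gmul m a b) c = gmul m a (gmul m b c) := by
  have h := congrArg (fun k => prod.lift (prod.lift a b) c ≫ k) assoc
  simp [gmul, prod.lift_map_assoc, prod.comp_lift_assoc, prod.associator_hom] at h
  refine h.trans ?_
  erw [prod.lift_fst_assoc, prod.lift_fst, prod.lift_fst_assoc, prod.lift_snd, prod.lift_snd]

lemma l_one_mul (unit_left : prod.lift (terminal.from V ≫ e) (𝟙 V) ≫ m = 𝟙 V)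
    {X : C} (a : X ⟶ V) : gmul m (terminal.from X ≫ e) a = a := by
  have h := congrArg (fun k => a ≫ k) unit_left
  simpa [gmul, prod.comp_lift_assoc, ← Category.assoc, terminal.comp_from] using h

lemma l_mul_one (unit_right : prod.lift (𝟙 V) (terminal.from V ≫ e) ≫ m = 𝟙 V)
    {X : C} (a : X ⟶ V) : gmul m a (terminal.from X ≫ e) = a := by
  have h := congrArg (fun k => a ≫ k) unit_right
  simpa [gmul, prod.comp_lift_assoc, ← Category.assoc, terminal.comp_from] using h

lemma l_inv_mul (inv_left : prod.lift ι (𝟙 V) ≫ m = terminal.from V ≫ e)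
    {X : C} (a : X ⟶ V) : gmul m (a ≫ ι) a = terminal.from X ≫ e := by
  have h := congrArg (fun k => a ≫ k) inv_left
  simpa [gmul, prod.comp_lift_assoc, ← Category.assoc, terminal.comp_from] using h

lemma l_mul_inv (inv_right : prod.lift (𝟙 V) ι ≫ m = terminal.from V ≫ e)
    {X : C} (a : X ⟶ V) : gmul m a (a ≫ ι) = terminal.from X ≫ e := by
  have h := congrArg (fun k => a ≫ k) inv_right
  simpa [gmul, prod.comp_lift_assoc, ← Category.assoc, terminal.comp_from] using h

lemma l_cancel1
    (assoc : prod.map m (𝟙 V) ≫ m = (prod.associator V V V).hom ≫ prod.map (𝟙 V) m ≫ m)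
    (unit_left : prod.lift (terminal.from V ≫ e) (𝟙 V) ≫ m = 𝟙 V)
    (inv_right : prod.lift (𝟙 V) ι ≫ m = terminal.from V ≫ e)
    {X : C} (a b : X ⟶ V) : gmul m a (gmul m (a ≫ ι) b) = b := by
  rw [← l_assoc assoc, l_mul_inv inv_right, l_one_mul unit_left]

lemma l_cancel2
    (assoc : prod.map m (𝟙 V) ≫ m = (prod.associator V V V).hom ≫ prod.map (𝟙 V) m ≫ m)
    (unit_right : prod.lift (𝟙 V) (terminal.from V ≫ e) ≫ m = 𝟙 V)
    (inv_left : prod.lift ι (𝟙 V) ≫ m = terminal.from V ≫ e)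
    {X : C} (a b : X ⟶ V) : gmul m (gmul m a (b ≫ ι)) b = a := by
  rw [l_assoc assoc, l_inv_mul inv_left, l_mul_one unit_right]

/-- `a · (b⁻¹ · a)⁻¹ = b`. -/
lemma l_id1
    (assoc : prod.map m (𝟙 V) ≫ m = (prod.associator V V V).hom ≫ prod.map (𝟙 V) m ≫ m)
    (unit_left : prod.lift (terminal.from V ≫ e) (𝟙 V) ≫ m = 𝟙 V)
    (unit_right : prod.lift (𝟙 V) (terminal.from V ≫ e) ≫ m = 𝟙 V)
    (inv_right : prod.lift (𝟙 V) ι ≫ m = terminal.from V ≫ e)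
    {X : C} (a b : X ⟶ V) : gmul m a ((gmul m (b ≫ ι) a) ≫ ι) = b := by
  set x := gmul m (b ≫ ι) a with hxdef
  have hx : gmul m b x = a := l_cancel1 assoc unit_left inv_right b a
  rw [← hx, l_assoc assoc, l_mul_inv inv_right, l_mul_one unit_right]

/-- `(a · d⁻¹)⁻¹ · a = d`. -/
lemma l_id2
    (assoc : prod.map m (𝟙 V) ≫ m = (prod.associator V V V).hom ≫ prod.map (𝟙 V) m ≫ m)
    (unit_left : prod.lift (terminal.from V ≫ e) (𝟙 V) ≫ m = 𝟙 V)
    (unit_right : prod.lift (𝟙 V) (terminal.from V ≫ e) ≫ m = 𝟙 V)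
    (inv_left : prod.lift ι (𝟙 V) ≫ m = terminal.from V ≫ e)
    {X : C} (a d : X ⟶ V) : gmul m ((gmul m a (d ≫ ι)) ≫ ι) a = d := by
  set y := gmul m a (d ≫ ι) with hydef
  have hy : gmul m y d = a := l_cancel2 assoc unit_right inv_left a d
  rw [← hy, ← l_assoc assoc, l_inv_mul inv_left, l_one_mul unit_left]

lemma l_e_inv
    (unit_right : prod.lift (𝟙 V) (terminal.from V ≫ e) ≫ m = 𝟙 V)
    (inv_left : prod.lift ι (𝟙 V) ≫ m = terminal.from V ≫ e) :
    e ≫ ι = e := by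
  have h1 : gmul m (e ≫ ι) e = terminal.from (⊤_ C) ≫ e := l_inv_mul inv_left e
  have h2 : gmul m (e ≫ ι) (terminal.from (⊤_ C) ≫ e) = e ≫ ι :=
    l_mul_one unit_right (e ≫ ι)
  have ht : terminal.from (⊤_ C) = 𝟙 (⊤_ C) := terminal.hom_ext _ _
  rw [ht, Category.id_comp] at h1 h2
  rw [← h2, h1]

end Group

section Eta

variable (I : C ⥤ C) [PreservesFiniteLimits I] (η : 𝟭 C ⟶ I)

lemma eta_gmul {V X : C} (m : V ⨯ V ⟶ V) (f g : X ⟶ V) :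
    gmul m f g ≫ η.app V =
      prod.lift (f ≫ η.app V) (g ≫ η.app V) ≫ inv (prodComparison I V V) ≫ I.map m := by
  have hm : m ≫ η.app V = η.app (V ⨯ V) ≫ I.map m := by
    simpa using η.naturality m
  have hmid : prod.lift f g ≫ η.app (V ⨯ V) =
      prod.lift (f ≫ η.app V) (g ≫ η.app V) ≫ inv (prodComparison I V V) := by
    rw [IsIso.eq_comp_inv]
    apply Limits.prod.hom_ext
    · have h1 : η.app (V ⨯ V) ≫ I.map prod.fst = prod.fst ≫ η.app V := by
        simpa using (η.naturality (prod.fst : V ⨯ V ⟶ V)).symm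
      simp [prodComparison_fst, h1]
      erw [prod.lift_fst_assoc, prod.lift_fst]
    · have h2 : η.app (V ⨯ V) ≫ I.map prod.snd = prod.snd ≫ η.app V := by
        simpa using (η.naturality (prod.snd : V ⨯ V ⟶ V)).symm
      simp [prodComparison_snd, h2]
      erw [prod.lift_snd_assoc, prod.lift_snd]
  calc gmul m f g ≫ η.app V
      = prod.lift f g ≫ (m ≫ η.app V) := by simp [gmul]
    _ = (prod.lift f g ≫ η.app (V ⨯ V)) ≫ I.map m := by rw [hm]; simp
    _ = prod.lift (f ≫ η.app V) (g ≫ η.app V) ≫ inv (prodComparison I V V) ≫ I.map m := by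
        rw [hmid]; simp

lemma eta_gmul_congr {V X : C} (m : V ⨯ V ⟶ V) {f g f' g' : X ⟶ V}
    (hf : f ≫ η.app V = f' ≫ η.app V) (hg : g ≫ η.app V = g' ≫ η.app V) :
    gmul m f g ≫ η.app V = gmul m f' g' ≫ η.app V := by
  rw [eta_gmul I η, eta_gmul I η, hf, hg]

end Eta

end Statement3Aux

open Statement3Aux

/-- For a group object `V` in a finitely complete category equipped with a
finite-limit-preserving endofunctor `I` and a natural transformation `η : 𝟭 ⟶ I`, the formal
disk bundle `T^∞V` (the pullback of `η_V` along itself) trivializes: `T^∞V ≅ V ⨯ 𝔻ₑ` over `V`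
(identifying `π` with `pr₁`), where `𝔻ₑ` is the formal disk at the unit (the pullback of
`η_V ∘ e` along `η_V`); and under this isomorphism `ev` is identified with right translation
by inverses of elements of `𝔻ₑ`, i.e. with `(id_V × i) ≫ (id_V × ι) ≫ m`. -/
theorem statement3 {C : Type*} [Category C] [HasFiniteLimits C]
    (I : C ⥤ C) [PreservesFiniteLimits I] (η : 𝟭 C ⟶ I)
    (V : C) (m : V ⨯ V ⟶ V) (e : ⊤_ C ⟶ V) (ι : V ⟶ V)
    (assoc : prod.map m (𝟙 V) ≫ m = (prod.associator V V V).hom ≫ prod.map (𝟙 V) m ≫ m)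
    (unit_left : prod.lift (terminal.from V ≫ e) (𝟙 V) ≫ m = 𝟙 V)
    (unit_right : prod.lift (𝟙 V) (terminal.from V ≫ e) ≫ m = 𝟙 V)
    (inv_left : prod.lift ι (𝟙 V) ≫ m = terminal.from V ≫ e)
    (inv_right : prod.lift (𝟙 V) ι ≫ m = terminal.from V ≫ e) :
    ∃ φ : pullback (η.app V) (η.app V) ≅ V ⨯ pullback (η.app V) (e ≫ η.app V),
      φ.hom ≫ prod.fst = pullback.fst (η.app V) (η.app V) ∧
      φ.hom ≫ (prod.map (𝟙 V) (pullback.fst (η.app V) (e ≫ η.app V))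
          ≫ prod.map (𝟙 V) ι ≫ m)
        = pullback.snd (η.app V) (η.app V) := by
  have hιη : ι ≫ η.app V = η.app V ≫ I.map ι := by simpa using η.naturality ι
  have heι : e ≫ ι = e := l_e_inv unit_right inv_left
  set P := pullback (η.app V) (η.app V) with hP
  set D := pullback (η.app V) (e ≫ η.app V) with hD
  set pf : P ⟶ V := pullback.fst (η.app V) (η.app V) with hpf
  set ps : P ⟶ V := pullback.snd (η.app V) (η.app V) with hps
  set df : D ⟶ V := pullback.fst (η.app V) (e ≫ η.app V) with hdf
  set ds : D ⟶ ⊤_ C := pullback.snd (η.app V) (e ≫ η.app V) with hds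
  -- the D-component of the trivialization
  set c : P ⟶ V := gmul m (ps ≫ ι) pf with hcdef
  have hc : c ≫ η.app V = terminal.from P ≫ (e ≫ η.app V) := by
    have h1 : c ≫ η.app V = gmul m (ps ≫ ι) ps ≫ η.app V :=
      eta_gmul_congr I η m rfl pullback.condition
    have h2 : gmul m (ps ≫ ι) ps = terminal.from P ≫ e := by
      have := congrArg (fun k => ps ≫ k) inv_left
      simpa [gmul, prod.comp_lift_assoc, ← Category.assoc, terminal.comp_from] using this
    rw [h1, h2, Category.assoc]
  set homD : P ⟶ D := pullback.lift c (terminal.from P) hc with hhomD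
  set homφ : P ⟶ V ⨯ D := prod.lift pf homD with hhom
  -- the right-translation morphism
  set b : V ⨯ D ⟶ V := gmul m prod.fst (prod.snd ≫ df ≫ ι) with hbdef
  have hb_eq : prod.map (𝟙 V) df ≫ prod.map (𝟙 V) ι ≫ m = b := by
    simp [hbdef, gmul, prod.map_map_assoc]
    congr 1
    apply Limits.prod.hom_ext
    · simp
      erw [prod.lift_fst]
    · simp
      erw [prod.lift_snd]
  have hb : prod.fst ≫ η.app V = b ≫ η.app V := by
    have hg : (prod.snd ≫ df ≫ ι) ≫ η.app V
        = (terminal.from (V ⨯ D) ≫ e) ≫ η.app V := by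
      have h1 : df ≫ η.app V = ds ≫ e ≫ η.app V := by
        simpa using (pullback.condition (f := η.app V) (g := e ≫ η.app V))
      calc (prod.snd ≫ df ≫ ι) ≫ η.app V
          = prod.snd ≫ df ≫ η.app V ≫ I.map ι := by simp [hιη]
        _ = prod.snd ≫ ds ≫ e ≫ η.app V ≫ I.map ι := by rw [reassoc_of% h1]
        _ = prod.snd ≫ ds ≫ e ≫ ι ≫ η.app V := by rw [hιη]
        _ = prod.snd ≫ ds ≫ e ≫ η.app V := by rw [reassoc_of% heι]
        _ = ((prod.snd ≫ ds) ≫ e) ≫ η.app V := by simp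
        _ = (terminal.from (V ⨯ D) ≫ e) ≫ η.app V := by
            rw [terminal.hom_ext (prod.snd ≫ ds) (terminal.from (V ⨯ D))]
    have := eta_gmul_congr I η m (f := prod.fst) (f' := prod.fst)
      (g := prod.snd ≫ df ≫ ι) (g' := terminal.from (V ⨯ D) ≫ e) rfl hg
    rw [hbdef, this, l_mul_one unit_right]
    exact rfl

  set invφ : V ⨯ D ⟶ P := pullback.lift prod.fst b hb with hinv
  have hinv_fst : invφ ≫ pf = prod.fst := pullback.lift_fst _ _ _
  have hinv_snd : invφ ≫ ps = b := pullback.lift_snd _ _ _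
  have hhom_fst : homφ ≫ prod.fst = pf := prod.lift_fst _ _
  have hhom_snd : homφ ≫ prod.snd = homD := prod.lift_snd _ _
  have hhomD_df : homD ≫ df = c := pullback.lift_fst _ _ _
  -- the key computation: hom followed by right translation is ev
  have key_ev : homφ ≫ b = ps := by
    rw [hbdef, comp_gmul]
    have h1 : homφ ≫ prod.fst = pf := hhom_fst
    have h2 : homφ ≫ prod.snd ≫ df ≫ ι = c ≫ ι := by
      rw [← Category.assoc, hhom_snd, ← Category.assoc, hhomD_df, Category.assoc]
    rw [h1, h2, hcdef]
    exact l_id1 assoc unit_left unit_right inv_right pf ps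
  have hom_inv : homφ ≫ invφ = 𝟙 P := by
    apply pullback.hom_ext
    · simp only [Category.assoc, Category.id_comp]
      rw [hinv_fst, hhom_fst]
    · simp only [Category.assoc, Category.id_comp]
      rw [hinv_snd, key_ev]
  have inv_hom : invφ ≫ homφ = 𝟙 (V ⨯ D) := by
    apply Limits.prod.hom_ext
    · simp only [Category.assoc, Category.id_comp]
      rw [hhom_fst, hinv_fst]
    · simp only [Category.assoc, Category.id_comp]
      rw [hhom_snd]
      apply pullback.hom_ext
      · rw [Category.assoc, hhomD_df]
        rw [hcdef, comp_gmul, ← Category.assoc, hinv_snd, hinv_fst]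
        rw [hbdef]
        have := l_id2 assoc unit_left unit_right inv_left
          (prod.fst : V ⨯ D ⟶ V) (prod.snd ≫ df)
        simpa [Category.assoc] using this
      · exact terminal.hom_ext _ _
  refine ⟨⟨homφ, invφ, hom_inv, inv_hom⟩, hhom_fst, ?_⟩
  show homφ ≫ _ = ps
  rw [hb_eq]
  exact key_ev
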